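/- Let G be a finitely presented indicable group not containing a free subsemigroup of rank 2. Then G is isomorphic to a semidirect product H ⋊ ℤ where H admits an ascending finite endomorphic presentation. -/

import Mathlib

/-- `K` has an ascending finite endomorphic presentation (finite L-presentation):
`K ≅ F(X)/⟨⟨⋃_{φ ∈ Φ*} φ(R)⟩⟩` with `X`, `R`, `Φ` finite, where `Φ*` is the monoid
generated by `Φ` under composition. -/
def HasAscendingFiniteLPresentation (K : Type*) [Group K] : Prop :=
  ∃ (n : ℕ) (R : Finset (FreeGroup (Fin n)))
    (Φ : Finset (Monoid.End (FreeGroup (Fin n)))),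
    Nonempty (K ≃* FreeGroup (Fin n) ⧸ Subgroup.normalClosure
      {w : FreeGroup (Fin n) |
        ∃ φ ∈ Submonoid.closure (Φ : Set (Monoid.End (FreeGroup (Fin n)))),
          ∃ r ∈ R, w = φ r})

/-- `G` is finitely presented. -/
def IsFinitelyPresentedGroup (G : Type*) [Group G] : Prop :=
  ∃ (n : ℕ) (R : Finset (FreeGroup (Fin n))),
    Nonempty (G ≃* FreeGroup (Fin n) ⧸
      Subgroup.normalClosure (R : Set (FreeGroup (Fin n))))

section Aux

open Subgroup

variable {G : Type*} [Group G]


/-- helper: conjugation maps closures into closures -/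
lemma conj_mem_closure_of {S T : Set G} {b : G} (h : ∀ x ∈ S, b * x * b⁻¹ ∈ closure T)
    {y : G} (hy : y ∈ closure S) : b * y * b⁻¹ ∈ closure T := by
  induction hy using closure_induction with
  | mem x hx => exact h x hx
  | one => simpa using one_mem _
  | mul x y hx hy hx' hy' =>
      have : b * (x * y) * b⁻¹ = (b * x * b⁻¹) * (b * y * b⁻¹) := by group
      rw [this]; exact mul_mem hx' hy'
  | inv x hx hx' =>
      have : b * x⁻¹ * b⁻¹ = (b * x * b⁻¹)⁻¹ := by group
      rw [this]; exact inv_mem hx'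

lemma pow_injective_of_ne_one {z : Multiplicative ℤ} (hz : z ≠ 1) {n m : ℕ}
    (h : z ^ n = z ^ m) : n = m := by
  have hz' : z.toAdd ≠ 0 := by
    intro h0
    exact hz (by rw [← ofAdd_toAdd z, h0, ofAdd_zero])
  have h2 : (n : ℤ) * z.toAdd = (m : ℤ) * z.toAdd := by
    have := congrArg Multiplicative.toAdd h
    simpa [toAdd_pow, nsmul_eq_mul] using this
  exact_mod_cast mul_right_cancel₀ hz' h2

/-- **Key lemma.** In a group with no free subsemigroup of rank 2, if `f a = 1` and
`f b ≠ 1` for a homomorphism to `ℤ`, then `a` lies in the subgroup generated by the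
conjugates `bⁿ a b⁻ⁿ` with `n ≥ 1`. -/
lemma key_conj_lemma (hnofree : ∀ φ : FreeSemigroup Bool →ₙ* G, ¬ Function.Injective φ)
    (f : G →* Multiplicative ℤ) {a b : G} (ha : f a = 1) (hb : f b ≠ 1) :
    a ∈ closure {x : G | ∃ n : ℕ, x = b ^ (n + 1) * a * (b ^ (n + 1))⁻¹} := by
  classical
  set c : Bool → G := fun s => (if s then a else 1) * b with hc
  set P : List Bool → G := fun l => (l.map c).prod with hP
  have hPnil : P [] = 1 := rfl
  have hPcons : ∀ s l, P (s :: l) = c s * P l := fun s l => by simp [hP]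
  have hfc : ∀ s, f (c s) = f b := by
    intro s; cases s <;> simp [hc, ha]
  have h1 : ∀ l, f (P l) = (f b) ^ l.length := by
    intro l; induction l with
    | nil => simp [hPnil]
    | cons s l ih => rw [hPcons, map_mul, hfc, ih, List.length_cons, pow_succ']
  have hlen_eq : ∀ l₁ l₂ : List Bool, P l₁ = P l₂ → l₁.length = l₂.length := by
    intro l₁ l₂ h
    have := h1 l₁
    rw [h, h1] at this
    exact (pow_injective_of_ne_one hb this).symm
  set S0 : Set G := {x : G | ∃ n : ℕ, x = b ^ n * a * (b ^ n)⁻¹} with hS0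
  have hconjS0 : ∀ x ∈ S0, b * x * b⁻¹ ∈ closure S0 := by
    rintro x ⟨n, rfl⟩
    refine subset_closure ⟨n + 1, ?_⟩
    group
  have h2 : ∀ l, P l * (b ^ l.length)⁻¹ ∈ closure S0 := by
    intro l; induction l with
    | nil => simpa [hPnil] using one_mem _
    | cons s l ih =>
        have key : P (s :: l) * (b ^ (s :: l).length)⁻¹
            = (if s then a else 1) * (b * (P l * (b ^ l.length)⁻¹) * b⁻¹) := by
          rw [hPcons, List.length_cons, pow_succ, hc]
          group
        rw [key]
        refine mul_mem ?_ (conj_mem_closure_of hconjS0 ih)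
        cases s
        · simpa using one_mem _
        · have hmem : a ∈ S0 := ⟨0, by simp⟩
          simpa using subset_closure hmem
  set S1 : Set G := {x : G | ∃ n : ℕ, x = b ^ (n + 1) * a * (b ^ (n + 1))⁻¹} with hS1
  have hconjS01 : ∀ x ∈ S0, b * x * b⁻¹ ∈ closure S1 := by
    rintro x ⟨n, rfl⟩
    refine subset_closure ⟨n, ?_⟩
    group
  -- the case of two words with distinct heads
  have hmain : ∀ l₁ l₂ : List Bool, P (true :: l₁) = P (false :: l₂) → a ∈ closure S1 := by
    intro l₁ l₂ heq
    have hlen : l₁.length = l₂.length := by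
      have := hlen_eq _ _ heq
      simpa using this
    have q₁mem := h2 l₁
    have q₂mem := h2 l₂
    set q₁ := P l₁ * (b ^ l₁.length)⁻¹ with hq₁d
    set q₂ := P l₂ * (b ^ l₂.length)⁻¹ with hq₂d
    have hq₁ : P l₁ = q₁ * b ^ l₁.length := (inv_mul_cancel_right _ _).symm
    have hq₂ : P l₂ = q₂ * b ^ l₂.length := (inv_mul_cancel_right _ _).symm
    have heq' : (a * b * q₁) * b ^ l₂.length = (b * q₂) * b ^ l₂.length := by
      have e1 : P (true :: l₁) = (a * b * q₁) * b ^ l₂.length := by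
        rw [hPcons, hq₁, hc, hlen]
        simp [mul_assoc]
      have e2 : P (false :: l₂) = (b * q₂) * b ^ l₂.length := by
        rw [hPcons, hq₂, hc]
        simp [mul_assoc]
      rw [← e1, ← e2, heq]
    have heq'' : a * b * q₁ = b * q₂ := mul_right_cancel heq'
    have ha' : a = b * (q₂ * q₁⁻¹) * b⁻¹ := by
      rw [eq_comm]
      calc b * (q₂ * q₁⁻¹) * b⁻¹ = (b * q₂) * q₁⁻¹ * b⁻¹ := by group
        _ = (a * b * q₁) * q₁⁻¹ * b⁻¹ := by rw [heq'']
        _ = a := by group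
    rw [ha']
    exact conj_mem_closure_of hconjS01 (mul_mem q₂mem (inv_mem q₁mem))
  -- peel common prefixes
  have h3 : ∀ l₁ l₂ : List Bool, P l₁ = P l₂ → l₁ ≠ l₂ → a ∈ closure S1 := by
    intro l₁
    induction l₁ with
    | nil =>
        intro l₂ heq hne
        exact absurd (List.length_eq_zero_iff.mp (hlen_eq _ _ heq.symm)) (fun h => hne (h ▸ rfl))
    | cons s l ih =>
        intro l₂ heq hne
        match l₂ with
        | [] => exact absurd (List.length_eq_zero_iff.mp (hlen_eq _ _ heq)) (by simp)
        | s' :: l' =>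
            by_cases hss : s = s'
            · subst hss
              have hP' : P l = P l' := by
                have h' := heq; rw [hPcons, hPcons] at h'
                exact mul_left_cancel h'
              exact ih l' hP' (fun h => hne (by rw [h]))
            · cases s <;> cases s'
              · exact absurd rfl hss
              · exact hmain l' l heq.symm
              · exact hmain l l' heq
              · exact absurd rfl hss
  -- apply `hnofree`
  obtain ⟨w₁, w₂, heq, hne⟩ : ∃ w₁ w₂ : FreeSemigroup Bool,
      FreeSemigroup.lift c w₁ = FreeSemigroup.lift c w₂ ∧ w₁ ≠ w₂ := by
    have := hnofree (FreeSemigroup.lift c)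
    simp only [Function.Injective, not_forall] at this
    obtain ⟨w₁, w₂, h1, h2⟩ := this
    exact ⟨w₁, w₂, h1, h2⟩
  have hbridge : ∀ w : FreeSemigroup Bool, FreeSemigroup.lift c w = P (w.head :: w.tail) := by
    intro w
    induction w using FreeSemigroup.recOnMul with
    | ih1 x => rw [FreeSemigroup.lift_of]; simp [hPcons, hPnil]
    | ih2 x y hx hy =>
        rw [map_mul, hx, hy]
        show _ = P ((FreeSemigroup.of x * y).head :: (FreeSemigroup.of x * y).tail)
        have e1 : (FreeSemigroup.of x * y).head = x := rfl
        have e2 : (FreeSemigroup.of x * y).tail = y.head :: y.tail := rfl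
        rw [e1, e2]
        simp [hP]
  refine h3 _ _ ((hbridge w₁).symm.trans (heq.trans (hbridge w₂))) ?_
  intro h
  apply hne
  injection h with e1 e2
  exact FreeSemigroup.ext e1 e2

lemma mem_closure_bounded {x : G} {g : ℕ → G} (h : x ∈ closure {y | ∃ n : ℕ, y = g n}) :
    ∃ N, x ∈ closure {y | ∃ n ≤ N, y = g n} := by
  have hU : {y : G | ∃ n : ℕ, y = g n} = ⋃ N : ℕ, {y | ∃ n ≤ N, y = g n} := by
    ext y
    simp only [Set.mem_setOf_eq, Set.mem_iUnion]
    exact ⟨fun ⟨n, e⟩ => ⟨n, n, le_refl n, e⟩, fun ⟨N, n, _, e⟩ => ⟨n, e⟩⟩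
  rw [hU, Subgroup.closure_iUnion] at h
  refine (mem_iSup_of_directed ?_).mp h
  intro N N'
  exact ⟨max N N',
    closure_mono (fun y ⟨n, hn, e⟩ => ⟨n, hn.trans (le_max_left _ _), e⟩),
    closure_mono (fun y ⟨n, hn, e⟩ => ⟨n, hn.trans (le_max_right _ _), e⟩)⟩

/-- The kernel of a surjection onto `ℤ` of a f.g. group without free subsemigroups
is finitely generated. -/
lemma ker_fg (hnofree : ∀ φ : FreeSemigroup Bool →ₙ* G, ¬ Function.Injective φ)
    {f : G →* Multiplicative ℤ} (hf : Function.Surjective f)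
    {n0 : ℕ} (ρ : FreeGroup (Fin n0) →* G) (hρ : Function.Surjective ρ) :
    ∃ t : G, f t = Multiplicative.ofAdd 1 ∧
      ∃ (k : ℕ) (x : Fin k → G), (∀ i, x i ∈ f.ker) ∧ closure (Set.range x) = f.ker := by
  classical
  obtain ⟨t, ht⟩ := hf (Multiplicative.ofAdd 1)
  have hft : f t ≠ 1 := by
    rw [ht]
    intro h
    have := congrArg Multiplicative.toAdd h
    simp at this
  have hft' : f t⁻¹ ≠ 1 := by
    rw [map_inv, ht]; intro h
    have := congrArg Multiplicative.toAdd h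
    simp at this
  refine ⟨t, ht, ?_⟩
  -- generators of G
  set g : Fin n0 → G := fun j => ρ (FreeGroup.of j) with hg
  have hgen : ∀ y : G, y ∈ closure (Set.range g) := by
    intro y
    obtain ⟨z, rfl⟩ := hρ y
    induction z using FreeGroup.induction_on with
    | C1 => simpa using one_mem _
    | of j => exact subset_closure ⟨j, rfl⟩
    | inv_of j ih => rw [map_inv]; exact inv_mem ih
    | mul z w ihz ihw => rw [map_mul]; exact mul_mem ihz ihw
  set m : Fin n0 → ℤ := fun j => (f (g j)).toAdd with hm
  set x : Fin n0 → G := fun j => g j * (t ^ (m j))⁻¹ with hx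
  have hxker : ∀ j, f (x j) = 1 := by
    intro j
    rw [hx]
    simp only [map_mul, map_inv, map_zpow, ht]
    rw [hm]
    simp [← ofAdd_zsmul]
  have hfconj : ∀ (j : Fin n0) (k : ℤ), f (t ^ k * x j * (t ^ k)⁻¹) = 1 := by
    intro j k
    rw [map_mul, map_mul, map_inv, hxker, mul_one, mul_inv_cancel]
  -- the full conjugate set
  set SW : Set G := {y | ∃ (j : Fin n0) (k : ℤ), y = t ^ k * x j * (t ^ k)⁻¹} with hSW
  set W : Subgroup G := closure SW with hW
  have hWconj : ∀ (k : ℤ) (y : G), y ∈ W → t ^ k * y * (t ^ k)⁻¹ ∈ W := by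
    intro k y hy
    refine conj_mem_closure_of ?_ hy
    rintro s ⟨j, k', rfl⟩
    refine subset_closure ⟨j, k + k', ?_⟩
    rw [zpow_add]
    group
  have hWker : W ≤ f.ker := by
    rw [hW]
    refine (closure_le _).mpr ?_
    rintro s ⟨j, k, rfl⟩
    exact hfconj j k
  have hkerW : (f.ker : Set G) ⊆ W := by
    -- U = { w * t^n }
    set U : Subgroup G :=
      { carrier := {y | ∃ w ∈ W, ∃ n : ℤ, y = w * t ^ n}
        one_mem' := ⟨1, one_mem _, 0, by simp⟩
        mul_mem' := by
          rintro y y' ⟨w, hw, n, rfl⟩ ⟨w', hw', n', rfl⟩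
          refine ⟨w * (t ^ n * w' * (t ^ n)⁻¹), mul_mem hw (hWconj n w' hw'), n + n', ?_⟩
          rw [zpow_add]
          group
        inv_mem' := by
          rintro y ⟨w, hw, n, rfl⟩
          refine ⟨t ^ (-n) * w⁻¹ * (t ^ (-n))⁻¹, hWconj (-n) w⁻¹ (inv_mem hw), -n, ?_⟩
          rw [zpow_neg]
          group } with hU
    have hUtop : ∀ y : G, y ∈ U := by
      intro y
      have : closure (Set.range g) ≤ U := by
        refine (closure_le _).mpr ?_
        rintro s ⟨j, rfl⟩
        exact ⟨x j, subset_closure ⟨j, 0, by simp⟩, m j, by rw [hx]; group⟩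
      exact this (hgen y)
    intro y hy
    obtain ⟨w, hw, n, rfl⟩ := hUtop y
    have hyk : f (w * t ^ n) = 1 := hy
    rw [map_mul, map_zpow, ht] at hyk
    have hw1 : f w = 1 := hWker hw
    rw [hw1, one_mul] at hyk
    have hn : n = 0 := by
      have := congrArg Multiplicative.toAdd hyk
      simpa [← ofAdd_zsmul] using this
    rw [hn]
    simpa using hw
  -- now the bounds from the key lemma
  have hups : ∀ j : Fin n0, ∃ N : ℕ, x j ∈
      closure {y | ∃ n ≤ N, y = t ^ ((n : ℤ) + 1) * x j * (t ^ ((n : ℤ) + 1))⁻¹} := by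
    intro j
    have hthis := key_conj_lemma hnofree f (hxker j) hft
    have hpow2 : ∀ n : ℕ, t ^ (n+1) = t ^ ((n:ℤ) + 1) := by
      intro n
      have e : ((n:ℤ) + 1) = ((n+1 : ℕ) : ℤ) := by push_cast; ring
      rw [e, zpow_natCast]
    have h' : x j ∈ closure {y : G | ∃ n : ℕ, y = t ^ ((n : ℤ) + 1) * x j * (t ^ ((n : ℤ) + 1))⁻¹} := by
      have hsets : {y : G | ∃ n : ℕ, y = t ^ (n + 1) * x j * (t ^ (n + 1))⁻¹}
          = {y : G | ∃ n : ℕ, y = t ^ ((n:ℤ) + 1) * x j * (t ^ ((n:ℤ) + 1))⁻¹} := by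
        ext y
        constructor
        · rintro ⟨n, rfl⟩; exact ⟨n, by rw [hpow2]⟩
        · rintro ⟨n, rfl⟩; exact ⟨n, by rw [hpow2]⟩
      rw [← hsets]
      exact hthis
    exact mem_closure_bounded h'
  have hdowns : ∀ j : Fin n0, ∃ N : ℕ, x j ∈
      closure {y | ∃ n ≤ N, y = t ^ (-(n : ℤ) - 1) * x j * (t ^ (-(n : ℤ) - 1))⁻¹} := by
    intro j
    have hthis := key_conj_lemma hnofree f (hxker j) hft'
    have hpow3 : ∀ n : ℕ, t⁻¹ ^ (n+1) = t ^ (-(n:ℤ) - 1) := by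
      intro n
      have e : (-(n:ℤ) - 1) = -((n+1 : ℕ) : ℤ) := by push_cast; ring
      rw [e, zpow_neg, zpow_natCast, inv_pow]
    have h' : x j ∈ closure {y : G | ∃ n : ℕ, y = t ^ (-(n : ℤ) - 1) * x j * (t ^ (-(n : ℤ) - 1))⁻¹} := by
      have hsets : {y : G | ∃ n : ℕ, y = t⁻¹ ^ (n + 1) * x j * (t⁻¹ ^ (n + 1))⁻¹}
          = {y : G | ∃ n : ℕ, y = t ^ (-(n:ℤ) - 1) * x j * (t ^ (-(n:ℤ) - 1))⁻¹} := by
        ext y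
        constructor
        · rintro ⟨n, rfl⟩; exact ⟨n, by rw [hpow3]⟩
        · rintro ⟨n, rfl⟩; exact ⟨n, by rw [hpow3]⟩
      rw [← hsets]
      exact hthis
    exact mem_closure_bounded h'
  choose Nup hNup using hups
  choose Ndown hNdown using hdowns
  set N0 : ℕ := (Finset.univ.sup Nup) + (Finset.univ.sup Ndown) + 1 with hN0
  have hNupN0 : ∀ j, Nup j + 1 ≤ N0 := by
    intro j
    have := Finset.le_sup (f := Nup) (Finset.mem_univ j)
    omega
  have hNdownN0 : ∀ j, Ndown j + 1 ≤ N0 := by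
    intro j
    have := Finset.le_sup (f := Ndown) (Finset.mem_univ j)
    omega
  set SWN : Set G := {y | ∃ (j : Fin n0) (k : ℤ), k.natAbs ≤ N0 ∧ y = t ^ k * x j * (t ^ k)⁻¹}
    with hSWN
  set B : Subgroup G := closure SWN with hB
  have hclaim : ∀ M : ℕ, ∀ (j : Fin n0) (k : ℤ), k.natAbs ≤ N0 + M →
      t ^ k * x j * (t ^ k)⁻¹ ∈ B := by
    intro M
    induction M with
    | zero =>
        intro j k hk
        exact subset_closure ⟨j, k, by omega, rfl⟩
    | succ M ih =>
        intro j k hk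
        by_cases hk' : k.natAbs ≤ N0 + M
        · exact ih j k hk'
        · have habs : k.natAbs = N0 + M + 1 := by omega
          rcases lt_or_gt_of_ne (show k ≠ 0 by intro h; subst h; omega)
            with hneg | hpos
          · -- k negative: use the "up" relation
            have hkval : k = -(N0 + M + 1 : ℤ) := by omega
            have hmem := hNup j
            have := conj_mem_closure_of (b := t ^ k) (T := SWN) ?_ hmem
            · exact this
            · rintro s ⟨n, hn, rfl⟩
              have e : t ^ k * (t ^ ((n:ℤ) + 1) * x j * (t ^ ((n:ℤ) + 1))⁻¹) * (t ^ k)⁻¹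
                  = t ^ (k + (n + 1)) * x j * (t ^ (k + (n + 1)))⁻¹ := by
                group
              rw [e]
              have hb : (k + ((n:ℤ) + 1)).natAbs ≤ N0 + M := by
                have h1 : (n:ℤ) + 1 ≤ (N0 : ℤ) := by
                  have := hNupN0 j
                  omega
                omega
              exact ih j _ hb
          · -- k positive: use the "down" relation
            have hkval : k = (N0 + M + 1 : ℤ) := by omega
            have hmem := hNdown j
            have := conj_mem_closure_of (b := t ^ k) (T := SWN) ?_ hmem
            · exact this
            · rintro s ⟨n, hn, rfl⟩
              have e : t ^ k * (t ^ (-(n:ℤ) - 1) * x j * (t ^ (-(n:ℤ) - 1))⁻¹) * (t ^ k)⁻¹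
                  = t ^ (k - (n + 1)) * x j * (t ^ (k - (n + 1)))⁻¹ := by
                group
              rw [e]
              have hb : (k - ((n:ℤ) + 1)).natAbs ≤ N0 + M := by
                have h1 : (n:ℤ) + 1 ≤ (N0 : ℤ) := by
                  have := hNdownN0 j
                  omega
                omega
              exact ih j _ hb
  have hBker : B = f.ker := by
    apply le_antisymm
    · rw [hB]
      refine (closure_le _).mpr ?_
      rintro s ⟨j, k, _, rfl⟩
      exact hfconj j k
    · intro y hy
      have hyW : y ∈ W := hkerW hy
      rw [hW] at hyW
      have hSWB : SW ⊆ (B : Set G) := by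
        rintro s ⟨j, k, rfl⟩
        exact hclaim k.natAbs j k (by omega)
      exact (closure_le _).mpr hSWB hyW
  -- reindex by a Fin type
  classical
  set ι := Fin n0 × Fin (2 * N0 + 1) with hι
  set xf : ι → G := fun p => t ^ ((p.2 : ℤ) - N0) * x p.1 * (t ^ ((p.2 : ℤ) - N0))⁻¹ with hxf
  have hrange : Set.range xf = SWN := by
    ext y
    constructor
    · rintro ⟨⟨j, i⟩, rfl⟩
      refine ⟨j, (i : ℤ) - N0, ?_, rfl⟩
      have := i.isLt
      omega
    · rintro ⟨j, k, hk, rfl⟩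
      have hlt : (k + N0).toNat < 2 * N0 + 1 := by omega
      refine ⟨⟨j, ⟨(k + N0).toNat, hlt⟩⟩, ?_⟩
      have e : ((⟨(k + N0).toNat, hlt⟩ : Fin (2 * N0 + 1)) : ℤ) - N0 = k := by
        simp only [Fin.val_mk]
        omega
      rw [hxf]
      simp only
      rw [e]
  set eqv := Fintype.equivFin ι with heqv
  refine ⟨Fintype.card ι, xf ∘ eqv.symm, ?_, ?_⟩
  · intro i
    simp only [Function.comp_apply, hxf]
    exact hfconj _ _
  · rw [Set.range_comp, Equiv.range_eq_univ, Set.image_univ, hrange, ← hB, hBker]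


lemma splitting_iso {f : G →* Multiplicative ℤ} {t : G} (ht : f t = Multiplicative.ofAdd 1) :
    Nonempty (G ≃* f.ker ⋊[MulAut.conjNormal.comp (zpowersHom G t)] Multiplicative ℤ) := by
  set φ : Multiplicative ℤ →* MulAut f.ker := MulAut.conjNormal.comp (zpowersHom G t) with hφ
  have hφ_apply : ∀ (z : Multiplicative ℤ) (k : f.ker),
      ((φ z k : f.ker) : G) = t ^ z.toAdd * k * (t ^ z.toAdd)⁻¹ := by
    intro z k
    rfl
  have hcompat : ∀ z : Multiplicative ℤ,
      f.ker.subtype.comp (φ z).toMonoidHom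
        = (MulAut.conj (zpowersHom G t z)).toMonoidHom.comp f.ker.subtype := by
    intro z
    ext k
    simp only [MonoidHom.comp_apply, coe_subtype, MulEquiv.coe_toMonoidHom, MulAut.conj_apply]
    rw [hφ_apply]
    rfl
  set e : f.ker ⋊[φ] Multiplicative ℤ →* G :=
    SemidirectProduct.lift f.ker.subtype (zpowersHom G t) hcompat with he
  have he_apply : ∀ p : f.ker ⋊[φ] Multiplicative ℤ, e p = (p.left : G) * t ^ p.right.toAdd := by
    intro p
    calc e p = e (SemidirectProduct.inl p.left * SemidirectProduct.inr p.right) := by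
          rw [SemidirectProduct.inl_left_mul_inr_right]
      _ = (p.left : G) * t ^ p.right.toAdd := by
          rw [map_mul, SemidirectProduct.lift_inl, SemidirectProduct.lift_inr]
          rfl
  have hft : ∀ z : ℤ, f (t ^ z) = Multiplicative.ofAdd z := by
    intro z
    rw [map_zpow, ht, ← ofAdd_zsmul]
    simp
  have hinj : Function.Injective e := by
    intro a b h
    rw [he_apply, he_apply] at h
    have hfa : f ((a.left : G) * t ^ a.right.toAdd) = f ((b.left : G) * t ^ b.right.toAdd) := by
      rw [h]
    rw [map_mul, map_mul, a.left.2, b.left.2, one_mul, one_mul, hft, hft] at hfa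
    have hr : a.right = b.right := by
      have := congrArg Multiplicative.toAdd hfa
      simpa using this
    have hl : (a.left : G) = b.left := by
      rw [hr] at h
      exact mul_right_cancel h
    exact SemidirectProduct.ext (Subtype.ext hl) hr
  have hsurj : Function.Surjective e := by
    intro y
    have hk : y * (t ^ (f y).toAdd)⁻¹ ∈ f.ker := by
      rw [MonoidHom.mem_ker, map_mul, map_inv, hft]
      simp
    refine ⟨⟨⟨y * (t ^ (f y).toAdd)⁻¹, hk⟩, f y⟩, ?_⟩
    rw [he_apply]
    simp
  exact ⟨(MulEquiv.ofBijective e ⟨hinj, hsurj⟩).symm⟩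

end Aux

section Aux2
open Subgroup (normalClosure_le_normal subset_normalClosure normalClosure_mono normalClosure_normal)

lemma map_normalClosure_le {G H : Type*} [Group G] [Group H] (f : G →* H) (S : Set G) :
    Subgroup.map f (Subgroup.normalClosure S) ≤ Subgroup.normalClosure (f '' S) := by
  rw [Subgroup.map_le_iff_le_comap]
  exact normalClosure_le_normal (fun s hs => subset_normalClosure ⟨s, hs, rfl⟩)

lemma map_normalClosure_eq {G H : Type*} [Group G] [Group H] (f : G →* H)
    (hf : Function.Surjective f) (S : Set G) :
    Subgroup.map f (Subgroup.normalClosure S) = Subgroup.normalClosure (f '' S) := by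
  refine le_antisymm (map_normalClosure_le f S) ?_
  have : (Subgroup.map f (Subgroup.normalClosure S)).Normal := Subgroup.Normal.map normalClosure_normal f hf
  refine normalClosure_le_normal ?_
  rintro s ⟨x, hx, hxe⟩
  exact ⟨x, subset_normalClosure hx, hxe⟩

/-- B.H. Neumann: the kernel of a surjection from a finitely generated group onto a
finitely presented group is normally finitely generated. -/
lemma neumann_finiteness {G H' : Type*} [Group G] [Group H']
    {n : ℕ} {R0 : Finset (FreeGroup (Fin n))}
    (e : G ≃* FreeGroup (Fin n) ⧸ Subgroup.normalClosure (R0 : Set (FreeGroup (Fin n))))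
    {m : ℕ} (ρ₀ : FreeGroup (Fin m) →* H') (hρ₀ : Function.Surjective ρ₀)
    (Θ : H' →* G) (hΘ : Function.Surjective Θ) :
    ∃ T : Finset H', Θ.ker = Subgroup.normalClosure (T : Set H') := by
  classical
  let Fn := FreeGroup (Fin n)
  let Fm := FreeGroup (Fin m)
  set N : Subgroup (FreeGroup (Fin n)) := Subgroup.normalClosure (R0 : Set Fn) with hN
  set q : FreeGroup (Fin n) →* G := e.symm.toMonoidHom.comp (QuotientGroup.mk' N) with hq
  have hq_surj : Function.Surjective q := by
    intro y
    obtain ⟨z, hz⟩ := QuotientGroup.mk'_surjective N (e y)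
    refine ⟨z, ?_⟩
    rw [hq]
    have := congrArg e.symm hz
    simpa using this
  have hker_q : q.ker = N := by
    rw [hq]
    have h1 : (e.symm.toMonoidHom.comp (QuotientGroup.mk' N)).ker = (QuotientGroup.mk' N).ker := by
      ext z
      simp [MonoidHom.mem_ker, map_eq_one_iff _ e.symm.injective]
    rw [h1, QuotientGroup.ker_mk']
  set ρ : FreeGroup (Fin m) →* G := Θ.comp ρ₀ with hρ
  have hρ_surj : Function.Surjective ρ := hΘ.comp hρ₀
  set u : FreeGroup (Fin m) →* FreeGroup (Fin n) := FreeGroup.lift (fun i => Classical.choose (hq_surj (ρ (FreeGroup.of i))))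
    with hu
  have hqu : ∀ w, q (u w) = ρ w := by
    have h1 : q.comp u = ρ := by
      refine FreeGroup.ext_hom _ _ (fun i => ?_)
      rw [hu, MonoidHom.comp_apply, FreeGroup.lift_apply_of]
      exact Classical.choose_spec (hq_surj (ρ (FreeGroup.of i)))
    intro w; rw [← h1]; rfl
  set v : FreeGroup (Fin n) →* FreeGroup (Fin m) := FreeGroup.lift (fun j => Classical.choose (hρ_surj (q (FreeGroup.of j))))
    with hv
  have hρv : ∀ w, ρ (v w) = q w := by
    have h1 : ρ.comp v = q := by
      refine FreeGroup.ext_hom _ _ (fun j => ?_)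
      rw [hv, MonoidHom.comp_apply, FreeGroup.lift_apply_of]
      exact Classical.choose_spec (hρ_surj (q (FreeGroup.of j)))
    intro w; rw [← h1]; rfl
  set T₀ : Finset (FreeGroup (Fin m)) :=
    (R0.image v) ∪ (Finset.univ.image fun i : Fin m => FreeGroup.of i * (v (u (FreeGroup.of i)))⁻¹)
    with hT₀
  have hT₀mem₁ : ∀ r ∈ R0, v r ∈ T₀ := by
    intro r hr
    exact Finset.mem_union_left _ (Finset.mem_image_of_mem v hr)
  have hT₀mem₂ : ∀ i : Fin m, FreeGroup.of i * (v (u (FreeGroup.of i)))⁻¹ ∈ T₀ := by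
    intro i
    exact Finset.mem_union_right _ (Finset.mem_image_of_mem _ (Finset.mem_univ i))
  have hT₀elems : ∀ s ∈ T₀, (∃ r ∈ R0, s = v r) ∨
      (∃ i : Fin m, s = FreeGroup.of i * (v (u (FreeGroup.of i)))⁻¹) := by
    intro s hs
    rcases Finset.mem_union.mp hs with h | h
    · obtain ⟨r, hr, rfl⟩ := Finset.mem_image.mp h
      exact Or.inl ⟨r, hr, rfl⟩
    · obtain ⟨i, _, rfl⟩ := Finset.mem_image.mp h
      exact Or.inr ⟨i, rfl⟩
  set D : Subgroup (FreeGroup (Fin m)) := Subgroup.normalClosure (T₀ : Set (FreeGroup (Fin m))) with hD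
  have hDnormal : D.Normal := normalClosure_normal
  have hDker : D ≤ ρ.ker := by
    refine normalClosure_le_normal ?_
    intro s hs
    rcases hT₀elems s hs with ⟨r, hr, rfl⟩ | ⟨i, rfl⟩
    · have hrk : r ∈ q.ker := by rw [hker_q]; exact subset_normalClosure hr
      simp only [SetLike.mem_coe, MonoidHom.mem_ker]
      rw [hρv]
      exact hrk
    · simp only [SetLike.mem_coe, MonoidHom.mem_ker, map_mul, map_inv]
      rw [hρv, hqu]
      simp
  have hkerD : ρ.ker ≤ D := by
    set p : FreeGroup (Fin m) →* FreeGroup (Fin m) ⧸ D := QuotientGroup.mk' D with hp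
    have hpvu : p = p.comp (v.comp u) := by
      refine FreeGroup.ext_hom _ _ (fun i => ?_)
      simp only [MonoidHom.comp_apply]
      have hgen : FreeGroup.of i * (v (u (FreeGroup.of i)))⁻¹ ∈ D :=
        subset_normalClosure (hT₀mem₂ i)
      have h1 : v (u (FreeGroup.of i)) * (FreeGroup.of i)⁻¹ ∈ D := by
        have := inv_mem hgen
        simpa using this
      have h2 := hDnormal.conj_mem _ h1 (FreeGroup.of i)⁻¹
      have e2 : (FreeGroup.of i)⁻¹ * (v (u (FreeGroup.of i)) * (FreeGroup.of i)⁻¹)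
          * (FreeGroup.of i)⁻¹⁻¹ = (FreeGroup.of i)⁻¹ * v (u (FreeGroup.of i)) := by
        group
      rw [e2] at h2
      show QuotientGroup.mk (FreeGroup.of i) = QuotientGroup.mk (v (u (FreeGroup.of i)))
      exact (QuotientGroup.eq (s := D)).mpr h2
    intro w hw
    have huw : u w ∈ N := by
      rw [← hker_q, MonoidHom.mem_ker, hqu]
      exact hw
    have hvuw : v (u w) ∈ D := by
      have h1 : v (u w) ∈ Subgroup.map v N := ⟨u w, huw, rfl⟩
      have hle : Subgroup.map v N ≤ D := by
        rw [hN]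
        refine le_trans (map_normalClosure_le v _) (normalClosure_mono ?_)
        rintro s ⟨r, hr, rfl⟩
        exact hT₀mem₁ r hr
      exact hle h1
    have hpw : p w = p (v (u w)) := by
      conv_lhs => rw [hpvu]
      rfl

    have hpw1 : p w = 1 := by
      rw [hpw]
      exact (QuotientGroup.eq_one_iff _).mpr hvuw
    have : w ∈ p.ker := hpw1
    rwa [hp, QuotientGroup.ker_mk'] at this
  have hkerρ : ρ.ker = D := le_antisymm hkerD hDker
  -- now push down to H'
  refine ⟨T₀.image ρ₀, ?_⟩
  have h1 : ρ.ker = Subgroup.comap ρ₀ Θ.ker := by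
    rw [hρ]; rfl
  have h2 : Subgroup.map ρ₀ ρ.ker = Θ.ker := by
    rw [h1, Subgroup.map_comap_eq_self_of_surjective hρ₀]
  rw [← h2, hkerρ, hD, map_normalClosure_eq ρ₀ hρ₀, Finset.coe_image]

set_option maxHeartbeats 2000000 in
/-- The kernel of the projection to `ℤ`, when finitely generated, admits an ascending
finite L-presentation. -/
lemma lpres_of_ker {G : Type*} [Group G] {f : G →* Multiplicative ℤ} {t : G}
    (ht : f t = Multiplicative.ofAdd 1)
    {k : ℕ} (x : Fin k → G) (hxker : ∀ i, x i ∈ f.ker)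
    (hxcl : Subgroup.closure (Set.range x) = f.ker)
    {n : ℕ} {R0 : Finset (FreeGroup (Fin n))}
    (e : G ≃* FreeGroup (Fin n) ⧸ Subgroup.normalClosure (R0 : Set (FreeGroup (Fin n)))) :
    HasAscendingFiniteLPresentation f.ker := by
  classical
  set K : Subgroup G := f.ker with hK
  set F := FreeGroup (Fin k)
  set π : FreeGroup (Fin k) →* K := FreeGroup.lift (fun i => (⟨x i, hxker i⟩ : K)) with hπdef
  have hπcoe : ∀ w, ((π w : K) : G) = FreeGroup.lift x w := by
    have h1 : K.subtype.comp π = FreeGroup.lift x := by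
      refine FreeGroup.ext_hom _ _ (fun i => ?_)
      simp [hπdef]
    intro w
    rw [← h1]; rfl
  have hπsur : Function.Surjective π := by
    intro y
    have hy : (y : G) ∈ Subgroup.closure (Set.range x) := by rw [hxcl]; exact y.2
    have : (y : G) ∈ (FreeGroup.lift x).range := by
      rw [FreeGroup.range_lift_eq_closure]; exact hy
    obtain ⟨w, hw⟩ := this
    exact ⟨w, Subtype.ext (by rw [hπcoe, hw])⟩
  -- the conjugation automorphism
  set α : MulAut K := MulAut.conjNormal t with hα
  have hαcoe : ∀ y : K, ((α y : K) : G) = t * y * t⁻¹ := fun y => MulAut.conjNormal_apply t y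
  have hαinvcoe : ∀ y : K, ((α⁻¹ y : K) : G) = t⁻¹ * y * t := by
    intro y
    have h1 : α⁻¹ = MulAut.conjNormal t⁻¹ := by rw [hα, ← map_inv]
    rw [h1]
    simpa using MulAut.conjNormal_apply t⁻¹ y
  have hαzcoe : ∀ (m : ℤ) (y : K), (((α ^ m) y : K) : G) = t ^ m * y * (t ^ m)⁻¹ := by
    intro m
    induction m using Int.induction_on with
    | zero => intro y; simp
    | succ j ih =>
        intro y
        have h1 : α ^ ((j : ℤ) + 1) = α ^ (j : ℤ) * α := zpow_add_one α j
        have h2 : ((α ^ ((j : ℤ) + 1)) y : G) = ((α ^ (j : ℤ)) (α y) : G) := by rw [h1]; rfl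
        rw [h2, ih (α y), hαcoe y, zpow_add_one]
        group
    | pred j ih =>
        intro y
        have h1 : α ^ (-(j : ℤ) - 1) = α ^ (-(j : ℤ)) * α⁻¹ := zpow_sub_one α (-j)
        have h2 : ((α ^ (-(j : ℤ) - 1)) y : G) = ((α ^ (-(j : ℤ))) (α⁻¹ y) : G) := by rw [h1]; rfl
        rw [h2, ih (α⁻¹ y), hαinvcoe y, zpow_sub_one]
        group
  -- lifted endomorphisms
  set φp : Monoid.End (FreeGroup (Fin k)) :=
    (FreeGroup.lift (fun i => Classical.choose (hπsur (α (π (FreeGroup.of i)))))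
      : FreeGroup (Fin k) →* FreeGroup (Fin k)) with hφp
  set φm : Monoid.End (FreeGroup (Fin k)) :=
    (FreeGroup.lift (fun i => Classical.choose (hπsur (α⁻¹ (π (FreeGroup.of i)))))
      : FreeGroup (Fin k) →* FreeGroup (Fin k)) with hφm
  have hπφp : ∀ w, π (φp w) = α (π w) := by
    have h1 : (π.comp (φp : FreeGroup (Fin k) →* FreeGroup (Fin k)))
        = (α : K →* K).comp π := by
      refine FreeGroup.ext_hom _ _ (fun i => ?_)
      simp only [MonoidHom.comp_apply, hφp, FreeGroup.lift_apply_of]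
      exact Classical.choose_spec (hπsur (α (π (FreeGroup.of i))))
    intro w
    have := congrFun (congrArg (fun (h : FreeGroup (Fin k) →* K) => (h : FreeGroup (Fin k) → K)) h1) w
    exact this
  have hπφm : ∀ w, π (φm w) = α⁻¹ (π w) := by
    have h1 : (π.comp (φm : FreeGroup (Fin k) →* FreeGroup (Fin k)))
        = (MulEquiv.toMonoidHom (α⁻¹ : MulAut K)).comp π := by
      refine FreeGroup.ext_hom _ _ (fun i => ?_)
      simp only [MonoidHom.comp_apply, hφm, FreeGroup.lift_apply_of]
      exact Classical.choose_spec (hπsur (α⁻¹ (π (FreeGroup.of i))))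
    intro w
    have := congrFun (congrArg (fun (h : FreeGroup (Fin k) →* K) => (h : FreeGroup (Fin k) → K)) h1) w
    exact this
  -- the endomorphism orbit sets
  set ΦS : Set (Monoid.End (FreeGroup (Fin k))) := {φp, φm} with hΦS
  have hφpΦS : φp ∈ ΦS := by rw [hΦS]; exact Set.mem_insert _ _
  have hφmΦS : φm ∈ ΦS := by rw [hΦS]; exact Set.mem_insert_of_mem _ rfl
  have hker_endo : ∀ ψ ∈ Submonoid.closure ΦS, ∀ w, π w = 1 → π (ψ w) = 1 := by
    intro ψ hψ
    induction hψ using Submonoid.closure_induction with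
    | mem ψ' hψ' =>
        rcases hψ' with h | h
        · subst h; intro w hw; rw [hπφp, hw, map_one]
        · subst h; intro w hw; rw [hπφm, hw, map_one]
    | one => intro w hw; exact hw
    | mul a b ha hb iha ihb =>
        intro w hw
        exact iha _ (ihb w hw)
  set orb : Finset (FreeGroup (Fin k)) → Set (FreeGroup (Fin k)) :=
    fun R => {w | ∃ ψ ∈ Submonoid.closure ΦS, ∃ r ∈ R, w = ψ r} with horb
  have horb_ker : ∀ (R : Finset (FreeGroup (Fin k))), (∀ r ∈ R, π r = 1) →
      ∀ w ∈ orb R, π w = 1 := by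
    rintro R hR w ⟨ψ, hψ, r, hr, rfl⟩
    exact hker_endo ψ hψ r (hR r hr)
  have horb_mono : ∀ {R R' : Finset (FreeGroup (Fin k))}, R ⊆ R' → orb R ⊆ orb R' := by
    rintro R R' hsub w ⟨ψ, hψ, r, hr, rfl⟩
    exact ⟨ψ, hψ, r, hsub hr, rfl⟩
  have horb_self : ∀ {R : Finset (FreeGroup (Fin k))} {r}, r ∈ R → r ∈ orb R := by
    intro R r hr
    exact ⟨1, one_mem _, r, hr, rfl⟩
  have horb_φp : ∀ (R : Finset (FreeGroup (Fin k))), ∀ w ∈ orb R, φp w ∈ orb R := by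
    rintro R w ⟨ψ, hψ, r, hr, rfl⟩
    exact ⟨φp * ψ, mul_mem (Submonoid.subset_closure hφpΦS) hψ, r, hr, rfl⟩
  have horb_φm : ∀ (R : Finset (FreeGroup (Fin k))), ∀ w ∈ orb R, φm w ∈ orb R := by
    rintro R w ⟨ψ, hψ, r, hr, rfl⟩
    exact ⟨φm * ψ, mul_mem (Submonoid.subset_closure hφmΦS) hψ, r, hr, rfl⟩
  -- first stage relators
  set R₁ : Finset (FreeGroup (Fin k)) :=
    (Finset.univ.image fun i => φp (φm (FreeGroup.of i)) * (FreeGroup.of i)⁻¹)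
    ∪ (Finset.univ.image fun i => φm (φp (FreeGroup.of i)) * (FreeGroup.of i)⁻¹) with hR₁
  have hR₁ker : ∀ r ∈ R₁, π r = 1 := by
    intro r hr
    rcases Finset.mem_union.mp hr with h | h
    · obtain ⟨i, _, rfl⟩ := Finset.mem_image.mp h
      rw [map_mul, map_inv, hπφp, hπφm]
      simp
    · obtain ⟨i, _, rfl⟩ := Finset.mem_image.mp h
      rw [map_mul, map_inv, hπφm, hπφp]
      simp
    -- the first-stage quotient
  set N₁ : Subgroup (FreeGroup (Fin k)) := Subgroup.normalClosure (orb R₁) with hN₁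
  have hN₁ker : N₁ ≤ π.ker := normalClosure_le_normal (fun w hw => horb_ker R₁ hR₁ker w hw)
  set mk₁ : FreeGroup (Fin k) →* (FreeGroup (Fin k) ⧸ N₁) := QuotientGroup.mk' N₁ with hmk₁
  have hmk₁sur : Function.Surjective mk₁ := QuotientGroup.mk'_surjective N₁
  have hmk₁ker : ∀ w, mk₁ w = 1 ↔ w ∈ N₁ := fun w => QuotientGroup.eq_one_iff w
  set θ : (FreeGroup (Fin k) ⧸ N₁) →* K := QuotientGroup.lift N₁ π hN₁ker with hθ
  have hθmk : ∀ w, θ (mk₁ w) = π w := fun w => QuotientGroup.lift_mk' N₁ hN₁ker w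
  have hθsur : Function.Surjective θ := by
    intro y
    obtain ⟨w, hw⟩ := hπsur y
    exact ⟨mk₁ w, by rw [hθmk, hw]⟩
  -- the induced automorphism of the quotient
  have hcomap_p : N₁ ≤ Subgroup.comap (φp : FreeGroup (Fin k) →* FreeGroup (Fin k)) N₁ :=
    normalClosure_le_normal (fun w hw => subset_normalClosure (horb_φp R₁ w hw))
  have hcomap_m : N₁ ≤ Subgroup.comap (φm : FreeGroup (Fin k) →* FreeGroup (Fin k)) N₁ :=
    normalClosure_le_normal (fun w hw => subset_normalClosure (horb_φm R₁ w hw))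
  set βp := QuotientGroup.map N₁ N₁ (φp : FreeGroup (Fin k) →* FreeGroup (Fin k)) hcomap_p
    with hβp
  set βm := QuotientGroup.map N₁ N₁ (φm : FreeGroup (Fin k) →* FreeGroup (Fin k)) hcomap_m
    with hβm
  have hβpmk : ∀ w, βp (mk₁ w) = mk₁ (φp w) := fun w => QuotientGroup.map_mk' N₁ N₁ _ hcomap_p w
  have hβmmk : ∀ w, βm (mk₁ w) = mk₁ (φm w) := fun w => QuotientGroup.map_mk' N₁ N₁ _ hcomap_m w
  have hmkR₁ : ∀ r ∈ R₁, mk₁ r = 1 := by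
    intro r hr
    exact (hmk₁ker r).mpr (subset_normalClosure (horb_self hr))
  have hcomp1 : βp.comp βm = MonoidHom.id _ := by
    refine QuotientGroup.monoidHom_ext N₁ (FreeGroup.ext_hom _ _ (fun i => ?_))
    simp only [MonoidHom.comp_apply, MonoidHom.id_apply]
    show βp (βm (mk₁ (FreeGroup.of i))) = mk₁ (FreeGroup.of i)
    rw [hβmmk, hβpmk]
    have h1 : mk₁ (φp (φm (FreeGroup.of i)) * (FreeGroup.of i)⁻¹) = 1 := by
      refine hmkR₁ _ ?_
      exact Finset.mem_union_left _ (Finset.mem_image_of_mem _ (Finset.mem_univ i))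
    rw [map_mul, map_inv] at h1
    exact mul_inv_eq_one.mp h1
  have hcomp2 : βm.comp βp = MonoidHom.id _ := by
    refine QuotientGroup.monoidHom_ext N₁ (FreeGroup.ext_hom _ _ (fun i => ?_))
    simp only [MonoidHom.comp_apply, MonoidHom.id_apply]
    show βm (βp (mk₁ (FreeGroup.of i))) = mk₁ (FreeGroup.of i)
    rw [hβpmk, hβmmk]
    have h1 : mk₁ (φm (φp (FreeGroup.of i)) * (FreeGroup.of i)⁻¹) = 1 := by
      refine hmkR₁ _ ?_
      exact Finset.mem_union_right _ (Finset.mem_image_of_mem _ (Finset.mem_univ i))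
    rw [map_mul, map_inv] at h1
    exact mul_inv_eq_one.mp h1
  set βA : MulAut (FreeGroup (Fin k) ⧸ N₁) := MonoidHom.toMulEquiv βp βm hcomp2 hcomp1 with hβA
  have hβAapp : ∀ q, βA q = βp q := fun _ => rfl
  have hβAinvapp : ∀ q, βA⁻¹ q = βm q := fun _ => rfl
  -- equivariance of θ
  have hθβ : ∀ q, θ (βA q) = α (θ q) := by
    have h1 : θ.comp (βA : (FreeGroup (Fin k) ⧸ N₁) →* (FreeGroup (Fin k) ⧸ N₁))
        = (α : K →* K).comp θ := by
      refine QuotientGroup.monoidHom_ext N₁ (FreeGroup.ext_hom _ _ (fun i => ?_))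
      simp only [MonoidHom.comp_apply]
      show θ (βA (mk₁ (FreeGroup.of i))) = α (θ (mk₁ (FreeGroup.of i)))
      rw [hβAapp, hβpmk, hθmk, hθmk, hπφp]
    intro q
    have := congrFun (congrArg (fun (h : (FreeGroup (Fin k) ⧸ N₁) →* K) => (h : _ → K)) h1) q
    simpa using this
  have hθβinv : ∀ q, θ (βA⁻¹ q) = α⁻¹ (θ q) := by
    intro q
    have h1 := hθβ (βA⁻¹ q)
    rw [show βA (βA⁻¹ q) = q from βA.apply_symm_apply q] at h1
    rw [h1]
    simp
  have hθβz : ∀ (m : ℤ) (q), θ ((βA ^ m) q) = (α ^ m) (θ q) := by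
    intro m
    induction m using Int.induction_on with
    | zero => intro q; simp
    | succ j ih =>
        intro q
        have h1 : βA ^ ((j : ℤ) + 1) = βA ^ (j : ℤ) * βA := zpow_add_one βA j
        have h2 : α ^ ((j : ℤ) + 1) = α ^ (j : ℤ) * α := zpow_add_one α j
        rw [h1, h2]
        show θ ((βA ^ (j : ℤ)) (βA q)) = (α ^ (j : ℤ)) (α (θ q))
        rw [ih (βA q), hθβ q]
    | pred j ih =>
        intro q
        have h1 : βA ^ (-(j : ℤ) - 1) = βA ^ (-(j : ℤ)) * βA⁻¹ := zpow_sub_one βA (-j)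
        have h2 : α ^ (-(j : ℤ) - 1) = α ^ (-(j : ℤ)) * α⁻¹ := zpow_sub_one α (-j)
        rw [h1, h2]
        show θ ((βA ^ (-(j : ℤ))) (βA⁻¹ q)) = (α ^ (-(j : ℤ))) (α⁻¹ (θ q))
        rw [ih (βA⁻¹ q), hθβinv q]
  -- the semidirect product and the comparison map
  set ψz : Multiplicative ℤ →* MulAut (FreeGroup (Fin k) ⧸ N₁) :=
    zpowersHom _ βA with hψz
  have hψzapp : ∀ (z : Multiplicative ℤ) q, ψz z q = (βA ^ z.toAdd) q := fun _ _ => rfl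
  have hcompat : ∀ z : Multiplicative ℤ,
      (K.subtype.comp θ).comp (MulEquiv.toMonoidHom (ψz z))
        = (MulEquiv.toMonoidHom (MulAut.conj (zpowersHom G t z))).comp (K.subtype.comp θ) := by
    intro z
    refine MonoidHom.ext fun q => ?_
    simp only [MonoidHom.comp_apply, MulEquiv.coe_toMonoidHom, Subgroup.coe_subtype,
      MulAut.conj_apply]
    rw [hψzapp, hθβz]
    exact hαzcoe z.toAdd (θ q)
  set Θ : (FreeGroup (Fin k) ⧸ N₁) ⋊[ψz] Multiplicative ℤ →* G :=
    SemidirectProduct.lift (K.subtype.comp θ) (zpowersHom G t) hcompat with hΘ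
  have hΘapp : ∀ p : (FreeGroup (Fin k) ⧸ N₁) ⋊[ψz] Multiplicative ℤ,
      Θ p = ((θ p.left : K) : G) * t ^ p.right.toAdd := by
    intro p
    calc Θ p = Θ (SemidirectProduct.inl p.left * SemidirectProduct.inr p.right) := by
          rw [SemidirectProduct.inl_left_mul_inr_right]
      _ = _ := by
          rw [map_mul, SemidirectProduct.lift_inl, SemidirectProduct.lift_inr]
          rfl
  have hft : ∀ z : ℤ, f (t ^ z) = Multiplicative.ofAdd z := by
    intro z
    rw [map_zpow, ht, ← ofAdd_zsmul]
    simp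
  have hΘsur : Function.Surjective Θ := by
    intro g
    have hgk : g * (t ^ (f g).toAdd)⁻¹ ∈ K := by
      rw [hK, MonoidHom.mem_ker, map_mul, map_inv, hft]
      simp
    obtain ⟨q, hq⟩ := hθsur ⟨g * (t ^ (f g).toAdd)⁻¹, hgk⟩
    refine ⟨⟨q, f g⟩, ?_⟩
    rw [hΘapp]
    simp only [hq]
    simp
    -- a surjection from a free group onto the semidirect product
  set gens : Fin (k+1) → ((FreeGroup (Fin k) ⧸ N₁) ⋊[ψz] Multiplicative ℤ) :=
    fun i => if h : (i : ℕ) < k then SemidirectProduct.inl (mk₁ (FreeGroup.of ⟨i, h⟩))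
      else SemidirectProduct.inr (Multiplicative.ofAdd 1) with hgens
  set ρh : FreeGroup (Fin (k+1)) →* ((FreeGroup (Fin k) ⧸ N₁) ⋊[ψz] Multiplicative ℤ) :=
    FreeGroup.lift gens with hρh
  have hρhsur : Function.Surjective ρh := by
    have hinl : ∀ w : FreeGroup (Fin k), SemidirectProduct.inl (mk₁ w) ∈ ρh.range := by
      intro w
      induction w using FreeGroup.induction_on with
      | C1 => simp only [map_one]; exact one_mem _
      | of j =>
          have hj : ((⟨(j : ℕ), by omega⟩ : Fin (k+1)) : ℕ) < k := by simpa using j.isLt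
          refine ⟨FreeGroup.of (⟨(j : ℕ), by omega⟩ : Fin (k+1)), ?_⟩
          rw [hρh, FreeGroup.lift_apply_of, hgens]
          simp only [dif_pos hj]
      | inv_of j ih =>
          rw [map_inv, map_inv]
          exact inv_mem ih
      | mul a b iha ihb =>
          rw [map_mul, map_mul]
          exact mul_mem iha ihb
    have hinr : ∀ z : Multiplicative ℤ,
        (SemidirectProduct.inr z : (FreeGroup (Fin k) ⧸ N₁) ⋊[ψz] Multiplicative ℤ) ∈ ρh.range := by
      intro z
      have hlast : ¬ (((⟨k, by omega⟩ : Fin (k+1)) : ℕ) < k) := by simp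
      have h1 : ρh (FreeGroup.of (⟨k, by omega⟩ : Fin (k+1)))
          = SemidirectProduct.inr (Multiplicative.ofAdd 1) := by
        rw [hρh, FreeGroup.lift_apply_of, hgens]
        simp only [dif_neg hlast]
      refine ⟨(FreeGroup.of (⟨k, by omega⟩ : Fin (k+1))) ^ z.toAdd, ?_⟩
      rw [map_zpow, h1, ← map_zpow]
      congr 1
      rw [← ofAdd_zsmul]
      simp
    intro p
    rw [← SemidirectProduct.inl_left_mul_inr_right p]
    obtain ⟨w, hw⟩ := hmk₁sur p.left
    exact mul_mem (hw ▸ hinl w) (hinr p.right)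
  -- apply Neumann finiteness
  obtain ⟨T, hTker⟩ := neumann_finiteness e ρh hρhsur Θ hΘsur
  have hTmem : ∀ z ∈ T, Θ z = 1 := by
    intro z hz
    have : z ∈ Θ.ker := by
      rw [hTker]
      exact subset_normalClosure hz
    exact this
  have hTright : ∀ z ∈ T, z.right = 1 := by
    intro z hz
    have h1 := hTmem z hz
    rw [hΘapp] at h1
    have h2 := congrArg f h1
    rw [map_mul, map_one, hft] at h2
    have h3 : f ((θ z.left : K) : G) = 1 := (θ z.left).2
    rw [h3, one_mul] at h2
    have h4 : z.right.toAdd = 0 := by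
      have := congrArg Multiplicative.toAdd h2
      simpa using this
    have : z.right = Multiplicative.ofAdd z.right.toAdd := rfl
    rw [this, h4]
    rfl
  have hTleft : ∀ z ∈ T, θ z.left = 1 := by
    intro z hz
    have h1 := hTmem z hz
    rw [hΘapp, hTright z hz] at h1
    simp only [toAdd_one, zpow_zero, mul_one] at h1
    exact Subtype.ext h1
  have hTinl : ∀ z ∈ T, z = SemidirectProduct.inl z.left := by
    intro z hz
    conv_lhs => rw [← SemidirectProduct.inl_left_mul_inr_right z]
    rw [hTright z hz, map_one, mul_one]
  -- lift the T-relators to the free group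
  set wfun : {z // z ∈ T} → FreeGroup (Fin k) :=
    fun z => Classical.choose (hmk₁sur z.1.left) with hwfun
  have hwfun_spec : ∀ z, mk₁ (wfun z) = z.1.left :=
    fun z => Classical.choose_spec (hmk₁sur z.1.left)
  set R₂ : Finset (FreeGroup (Fin k)) := T.attach.image wfun with hR₂
  set R : Finset (FreeGroup (Fin k)) := R₁ ∪ R₂ with hR
  have hRker : ∀ r ∈ R, π r = 1 := by
    intro r hr
    rcases Finset.mem_union.mp hr with h | h
    · exact hR₁ker r h
    · obtain ⟨z, _, rfl⟩ := Finset.mem_image.mp h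
      rw [← hθmk, hwfun_spec]
      exact hTleft z.1 z.2
  set NR : Subgroup (FreeGroup (Fin k)) := Subgroup.normalClosure (orb R) with hNR
  -- β-stable normal closure in the quotient
  set Sbar : Set (FreeGroup (Fin k) ⧸ N₁) :=
    {q' | ∃ z : {z // z ∈ T}, ∃ m : ℤ, q' = (βA ^ m) (z.1.left)} with hSbar
  set M : Subgroup (FreeGroup (Fin k) ⧸ N₁) := Subgroup.normalClosure Sbar with hM
  have hβA_zpow_comp : ∀ (a b : ℤ) (y : FreeGroup (Fin k) ⧸ N₁),
      (βA ^ a) ((βA ^ b) y) = (βA ^ (a + b)) y := by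
    intro a b y
    rw [zpow_add]
    rfl
  have hMβ : ∀ (m : ℤ), ∀ y ∈ M, (βA ^ m) y ∈ M := by
    intro m y hy
    have h1 : (βA ^ m) y ∈ Subgroup.map (MulEquiv.toMonoidHom (βA ^ m)) M := ⟨y, hy, rfl⟩
    have h2 : Subgroup.map (MulEquiv.toMonoidHom (βA ^ m)) M ≤ M := by
      rw [hM]
      refine le_trans (map_normalClosure_le _ _) (normalClosure_le_normal ?_)
      rintro s ⟨q', ⟨z, j, rfl⟩, rfl⟩
      refine subset_normalClosure ⟨z, m + j, ?_⟩
      simp only [MulEquiv.coe_toMonoidHom]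
      rw [hβA_zpow_comp]
    exact h2 h1
  set inlM : Subgroup ((FreeGroup (Fin k) ⧸ N₁) ⋊[ψz] Multiplicative ℤ) :=
    Subgroup.map SemidirectProduct.inl M with hinlM
  have hinlMnormal : inlM.Normal := by
    constructor
    rintro x ⟨mq, hmq, rfl⟩ g
    have hg : g = SemidirectProduct.inl g.left * SemidirectProduct.inr g.right :=
      (SemidirectProduct.inl_left_mul_inr_right g).symm
    have hcalc : g * SemidirectProduct.inl mq * g⁻¹
        = SemidirectProduct.inl g.left
          * (SemidirectProduct.inr g.right * SemidirectProduct.inl mq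
              * SemidirectProduct.inr g.right⁻¹)
          * SemidirectProduct.inl g.left⁻¹ := by
      rw [map_inv, map_inv]
      conv_lhs => rw [hg]
      group
    rw [hcalc, ← SemidirectProduct.inl_aut, ← map_mul, ← map_mul]
    refine ⟨g.left * ((ψz g.right) mq) * g.left⁻¹, ?_, rfl⟩
    have h1 : (ψz g.right) mq ∈ M := by
      rw [hψzapp]
      exact hMβ _ _ hmq
    exact (hM ▸ normalClosure_normal).conj_mem _ h1 g.left
  have hTinlM : (T : Set ((FreeGroup (Fin k) ⧸ N₁) ⋊[ψz] Multiplicative ℤ)) ⊆ ↑inlM := by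
    intro z hz
    rw [hTinl z hz]
    refine ⟨z.left, ?_, rfl⟩
    refine subset_normalClosure ⟨⟨z, hz⟩, 0, ?_⟩
    simp
  -- lifting the orbit set to the free group
  set SF : Set (FreeGroup (Fin k)) :=
    {w' | ∃ z : {z // z ∈ T}, ∃ m : ℕ, w' = (φp ^ m) (wfun z) ∨ w' = (φm ^ m) (wfun z)}
    with hSF
  have hmkpow_p : ∀ (m : ℕ) (w' : FreeGroup (Fin k)),
      mk₁ ((φp ^ m) w') = (βA ^ (m : ℤ)) (mk₁ w') := by
    intro m
    induction m with
    | zero => intro w'; simp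
    | succ j ih =>
        intro w'
        have h1 : (φp ^ (j + 1)) w' = (φp ^ j) (φp w') := by rw [pow_succ]; rfl
        have h2 : ((j : ℤ) + 1) = ((j + 1 : ℕ) : ℤ) := by push_cast; ring
        rw [h1, ih (φp w'), ← h2, ← hβA_zpow_comp (j : ℤ) 1, zpow_one, hβAapp, hβpmk]
  have hmkpow_m : ∀ (m : ℕ) (w' : FreeGroup (Fin k)),
      mk₁ ((φm ^ m) w') = (βA ^ (-(m : ℤ))) (mk₁ w') := by
    intro m
    induction m with
    | zero => intro w'; simp
    | succ j ih =>
        intro w'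
        have h1 : (φm ^ (j + 1)) w' = (φm ^ j) (φm w') := by rw [pow_succ]; rfl
        have h2 : (-(j : ℤ) + -1) = -((j + 1 : ℕ) : ℤ) := by push_cast; ring
        rw [h1, ih (φm w'), ← h2, ← hβA_zpow_comp (-(j : ℤ)) (-1), zpow_neg_one, hβAinvapp,
          hβmmk]
  have himg : mk₁ '' SF = Sbar := by
    ext q'
    constructor
    · rintro ⟨w', ⟨z, m, h | h⟩, rfl⟩
      · exact ⟨z, m, by rw [h, hmkpow_p, hwfun_spec]⟩
      · exact ⟨z, -(m : ℤ), by rw [h, hmkpow_m, hwfun_spec]⟩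
    · rintro ⟨z, m, rfl⟩
      obtain ⟨m', hm' | hm'⟩ := Int.eq_nat_or_neg m
      · exact ⟨(φp ^ m') (wfun z), ⟨z, m', Or.inl rfl⟩, by rw [hmkpow_p, hwfun_spec, hm']⟩
      · exact ⟨(φm ^ m') (wfun z), ⟨z, m', Or.inr rfl⟩, by rw [hmkpow_m, hwfun_spec, hm']⟩
  -- the two needed sub-closure bounds
  have hSFNR : Subgroup.normalClosure SF ≤ NR := by
    refine normalClosure_le_normal ?_
    rintro w' ⟨z, m, h | h⟩
    · refine subset_normalClosure ⟨φp ^ m,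
        Submonoid.pow_mem _ (Submonoid.subset_closure hφpΦS) m,
        wfun z, ?_, h⟩
      exact Finset.mem_union_right _ (Finset.mem_image_of_mem wfun (Finset.mem_attach T z))
    · refine subset_normalClosure ⟨φm ^ m,
        Submonoid.pow_mem _ (Submonoid.subset_closure hφmΦS) m,
        wfun z, ?_, h⟩
      exact Finset.mem_union_right _ (Finset.mem_image_of_mem wfun (Finset.mem_attach T z))
  have hN₁NR : N₁ ≤ NR := by
    rw [hN₁, hNR]
    exact normalClosure_mono (horb_mono Finset.subset_union_left)
  -- the key inclusion
  have hkerNR : π.ker ≤ NR := by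
    intro w hw
    rw [MonoidHom.mem_ker] at hw
    have hθq : θ (mk₁ w) = 1 := by rw [hθmk, hw]
    have hinlq : SemidirectProduct.inl (mk₁ w) ∈ Θ.ker := by
      rw [MonoidHom.mem_ker, hΘ, SemidirectProduct.lift_inl]
      simp [hθq]
    rw [hTker] at hinlq
    have h1 : Subgroup.normalClosure (T : Set _) ≤ inlM :=
      normalClosure_le_normal hTinlM
    obtain ⟨mq, hmq, hmqeq⟩ := h1 hinlq
    have hqM : mk₁ w ∈ M := by
      have := SemidirectProduct.inl_injective hmqeq
      rwa [← this]
    rw [hM, ← himg, ← map_normalClosure_eq mk₁ hmk₁sur] at hqM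
    obtain ⟨w', hw', hmkeq⟩ := hqM
    have hdiff : w'⁻¹ * w ∈ N₁ := by
      have : mk₁ (w'⁻¹ * w) = 1 := by
        rw [map_mul, map_inv, hmkeq]
        simp
      exact (hmk₁ker _).mp this
    have : w = w' * (w'⁻¹ * w) := by group
    rw [this]
    exact mul_mem (hSFNR hw') (hN₁NR hdiff)
  have hNRker : NR ≤ π.ker := normalClosure_le_normal (fun w hw => horb_ker R hRker w hw)
  have hker_eq : π.ker = NR := le_antisymm hkerNR hNRker
  -- assemble the L-presentation
  set Φfin : Finset (Monoid.End (FreeGroup (Fin k))) := {φp, φm} with hΦfin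
  have hΦcoe : (Φfin : Set (Monoid.End (FreeGroup (Fin k)))) = ΦS := by
    rw [hΦfin, hΦS]
    simp
  refine ⟨k, R, Φfin, ⟨?_⟩⟩
  have hset : {w : FreeGroup (Fin k) |
      ∃ φ ∈ Submonoid.closure (Φfin : Set (Monoid.End (FreeGroup (Fin k)))),
        ∃ r ∈ R, w = φ r} = orb R := by
    rw [hΦcoe, horb]
  have hfinal : π.ker = Subgroup.normalClosure {w : FreeGroup (Fin k) |
      ∃ φ ∈ Submonoid.closure (Φfin : Set (Monoid.End (FreeGroup (Fin k)))),
        ∃ r ∈ R, w = φ r} := by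
    rw [hset, hker_eq, hNR]
  exact (QuotientGroup.quotientKerEquivOfSurjective π hπsur).symm.trans
    (QuotientGroup.quotientMulEquivOfEq hfinal)
end Aux2

/-- **Theorem 2.** A finitely presented indicable group with no free subsemigroup of
rank 2 is a semidirect product `H ⋊ ℤ` where `H` has an ascending finite endomorphic
presentation. -/
theorem semidirect_LPresentation_of_fp_indicable_no_free_subsemigroup {G : Type*}
    [Group G] (hG : IsFinitelyPresentedGroup G)
    (hind : ∃ f : G →* Multiplicative ℤ, Function.Surjective f)
    (hnofree : ∀ φ : FreeSemigroup Bool →ₙ* G, ¬ Function.Injective φ) :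
    ∃ (H : Subgroup G) (φ : Multiplicative ℤ →* MulAut H),
      HasAscendingFiniteLPresentation H ∧
      Nonempty (G ≃* H ⋊[φ] Multiplicative ℤ) := by
  classical
  obtain ⟨f, hf⟩ := hind
  obtain ⟨n, R0, ⟨e⟩⟩ := hG
  have hρG : Function.Surjective (e.symm.toMonoidHom.comp
      (QuotientGroup.mk' (Subgroup.normalClosure (R0 : Set (FreeGroup (Fin n)))))) := by
    intro y
    obtain ⟨z, hz⟩ := QuotientGroup.mk'_surjective _ (e y)
    refine ⟨z, ?_⟩
    have := congrArg e.symm hz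
    simpa using this
  obtain ⟨t, ht, k, x, hxker, hxcl⟩ := ker_fg hnofree hf _ hρG
  obtain ⟨esd⟩ := splitting_iso ht
  exact ⟨f.ker, MulAut.conjNormal.comp (zpowersHom G t),
    lpres_of_ker ht x hxker hxcl e, ⟨esd⟩⟩
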